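/- For all p, g ∈ 𝔽₂[t] there exist quadratic forms m₀ and m₀' on finitely generated free 𝔽₂[t]-modules, each admitting a Lagrangian, such that the orthogonal direct sum P_{p, g} ⊕ m₀ is isometric to P_{p·g, 1} ⊕ m₀'. (That is, [P_{p,g}] = [P_{pg,1}] in the Witt group of quadratic forms over 𝔽₂[t].) -/

import Mathlib

set_option linter.unusedSectionVars false
set_option maxHeartbeats 1000000


/-- The quadratic form `P_{p,g}` on `𝔽₂[t]²`: `Q(x, y) = p·x² + x·y + g·y²`. -/
noncomputable def Ppg (p g : Polynomial (ZMod 2))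
    (v : Polynomial (ZMod 2) × Polynomial (ZMod 2)) : Polynomial (ZMod 2) :=
  p * v.1 ^ 2 + v.1 * v.2 + g * v.2 ^ 2

/-- `Q` is a quadratic form over `𝔽₂[t]`: `Q(c·v) = c²·Q(v)` and the polar form
`B(u, v) = Q(u+v) − Q(u) − Q(v)` is bilinear. -/
def IsQuadraticForm {M : Type*} [AddCommGroup M] [Module (Polynomial (ZMod 2)) M]
    (Q : M → Polynomial (ZMod 2)) : Prop :=
  (∀ (c : Polynomial (ZMod 2)) (v : M), Q (c • v) = c ^ 2 * Q v) ∧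
  (∀ u : M, IsLinearMap (Polynomial (ZMod 2)) fun w => Q (u + w) - Q u - Q w)

/-- `Q` admits a Lagrangian: a submodule `L` with `Q(L) = 0` and `L = L^⊥` with
respect to the polar form of `Q`. -/
def HasLagrangian {M : Type*} [AddCommGroup M] [Module (Polynomial (ZMod 2)) M]
    (Q : M → Polynomial (ZMod 2)) : Prop :=
  ∃ L : Submodule (Polynomial (ZMod 2)) M,
    (∀ v ∈ L, Q v = 0) ∧
    (L : Set M) = {v | ∀ l ∈ L, Q (v + l) - Q v - Q l = 0}

noncomputable section WittAux

abbrev Fq := Polynomial (ZMod 2)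

lemma Fq.two : (2 : Fq) = 0 := CharTwo.two_eq_zero

lemma Fq.addself (a : Fq) : a + a = 0 := CharTwo.add_self_eq_zero a

lemma Fq.eq_of_add_eq_zero {a b : Fq} (h : a + b = 0) : a = b := by
  have : a - b = 0 := by rw [CharTwo.sub_eq_add]; exact h
  exact sub_eq_zero.mp this

namespace WittAux

variable {M N P M' N' : Type*} [AddCommGroup M] [Module Fq M] [AddCommGroup N] [Module Fq N]
  [AddCommGroup P] [Module Fq P] [AddCommGroup M'] [Module Fq M'] [AddCommGroup N'] [Module Fq N']

def QS (A : M → Fq) (B : N → Fq) : M × N → Fq := fun v => A v.1 + B v.2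

lemma polar_Ppg (a b : Fq) (u w : Fq × Fq) :
    Ppg a b (u + w) - Ppg a b u - Ppg a b w = u.1 * w.2 + u.2 * w.1 := by
  simp only [Ppg, Prod.fst_add, Prod.snd_add]
  linear_combination (a * u.1 * w.1 + b * u.2 * w.2) * Fq.two

lemma polar_QS (A : M → Fq) (B : N → Fq) (u w : M × N) :
    QS A B (u + w) - QS A B u - QS A B w
      = (A (u.1 + w.1) - A u.1 - A w.1) + (B (u.2 + w.2) - B u.2 - B w.2) := by
  simp only [QS, Prod.fst_add, Prod.snd_add]; ring

lemma qf_zero {Q : M → Fq} (hQ : IsQuadraticForm Q) : Q 0 = 0 := by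
  have := hQ.1 0 0
  simpa using this

/-- transport of Lagrangians along linear equivalences -/
lemma hasLag_comp {Q : M → Fq} (hQ : HasLagrangian Q) (e : N ≃ₗ[Fq] M) :
    HasLagrangian (fun v => Q (e v)) := by
  obtain ⟨L, hL0, hLperp⟩ := hQ
  refine ⟨L.comap (e : N →ₗ[Fq] M), fun v hv => hL0 _ hv, ?_⟩
  ext v
  constructor
  · intro hv l hl
    have h1 : (e v : M) ∈ (L : Set M) := hv
    rw [hLperp] at h1
    have := h1 (e l) hl
    simpa [map_add] using this
  · intro hv
    have : (e v : M) ∈ (L : Set M) := by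
      rw [hLperp]
      intro m hm
      have := hv (e.symm m) (by simpa using hm)
      simpa [map_add] using this
    exact this

lemma hasLag_QS {A : M → Fq} {B : N → Fq} (hAq : IsQuadraticForm A) (hBq : IsQuadraticForm B)
    (hA : HasLagrangian A) (hB : HasLagrangian B) : HasLagrangian (QS A B) := by
  obtain ⟨L₁, h10, h1p⟩ := hA
  obtain ⟨L₂, h20, h2p⟩ := hB
  refine ⟨L₁.prod L₂, ?_, ?_⟩
  · rintro ⟨v₁, v₂⟩ ⟨hv₁, hv₂⟩
    simp [QS, h10 _ hv₁, h20 _ hv₂]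
  · ext ⟨w₁, w₂⟩
    constructor
    · rintro ⟨hw₁, hw₂⟩ ⟨l₁, l₂⟩ ⟨hl₁, hl₂⟩
      rw [polar_QS]
      have e₁ : A (w₁ + l₁) - A w₁ - A l₁ = 0 := by
        have : w₁ ∈ (L₁ : Set M) := hw₁
        rw [h1p] at this; exact this l₁ hl₁
      have e₂ : B (w₂ + l₂) - B w₂ - B l₂ = 0 := by
        have : w₂ ∈ (L₂ : Set N) := hw₂
        rw [h2p] at this; exact this l₂ hl₂
      simp [e₁, e₂]
    · intro hw
      constructor
      · have : w₁ ∈ (L₁ : Set M) := by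
          rw [h1p]
          intro l₁ hl₁
          have := hw (l₁, 0) ⟨hl₁, L₂.zero_mem⟩
          rw [polar_QS] at this
          simpa [qf_zero hBq] using this
        exact this
      · have : w₂ ∈ (L₂ : Set N) := by
          rw [h2p]
          intro l₂ hl₂
          have := hw (0, l₂) ⟨L₁.zero_mem, hl₂⟩
          rw [polar_QS] at this
          simpa [qf_zero hAq] using this
        exact this

lemma hasLag_zero : HasLagrangian (fun _ : (Fin 0 → Fq) => (0:Fq)) := by
  refine ⟨⊤, fun v _ => rfl, ?_⟩
  ext v
  simp

/-- `a x² + x y` is metabolic. -/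
lemma hasLag_a0 (a : Fq) : HasLagrangian (Ppg a 0) := by
  refine ⟨LinearMap.ker (LinearMap.fst Fq Fq Fq), ?_, ?_⟩
  · rintro ⟨x, y⟩ hx
    simp only [LinearMap.mem_ker, LinearMap.fst_apply] at hx
    simp [Ppg, hx]
  · ext ⟨x, y⟩
    simp only [SetLike.mem_coe, LinearMap.mem_ker, LinearMap.fst_apply, Set.mem_setOf_eq]
    constructor
    · rintro h ⟨lx, ly⟩ hl
      simp only [LinearMap.mem_ker, LinearMap.fst_apply] at hl
      rw [polar_Ppg]
      simp [h, hl]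
    · intro h
      have := h (0, 1) (by simp)
      rw [polar_Ppg] at this
      simpa using this

/-- `x y + b y²` is metabolic. -/
lemma hasLag_0b (b : Fq) : HasLagrangian (Ppg 0 b) := by
  refine ⟨LinearMap.ker (LinearMap.snd Fq Fq Fq), ?_, ?_⟩
  · rintro ⟨x, y⟩ hx
    simp only [LinearMap.mem_ker, LinearMap.snd_apply] at hx
    simp [Ppg, hx]
  · ext ⟨x, y⟩
    simp only [SetLike.mem_coe, LinearMap.mem_ker, LinearMap.snd_apply, Set.mem_setOf_eq]
    constructor
    · rintro h ⟨lx, ly⟩ hl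
      simp only [LinearMap.mem_ker, LinearMap.snd_apply] at hl
      rw [polar_Ppg]
      simp [h, hl]
    · intro h
      have := h (1, 0) (by simp)
      rw [polar_Ppg] at this
      simpa using this

/-- the diagonal Lagrangian in `q ⊥ q`. -/
lemma hasLag_diag (a b : Fq) : HasLagrangian (QS (Ppg a b) (Ppg a b)) := by
  have memker : ∀ w : (Fq×Fq) × (Fq×Fq),
      w ∈ LinearMap.ker ((LinearMap.fst Fq (Fq×Fq) (Fq×Fq)) - (LinearMap.snd Fq (Fq×Fq) (Fq×Fq)))
        ↔ w.1 = w.2 := by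
    intro w
    simp only [LinearMap.mem_ker, LinearMap.sub_apply, LinearMap.fst_apply, LinearMap.snd_apply,
      sub_eq_zero]
  refine ⟨LinearMap.ker ((LinearMap.fst Fq (Fq×Fq) (Fq×Fq)) - (LinearMap.snd Fq (Fq×Fq) (Fq×Fq))), ?_, ?_⟩
  · intro v hv
    rw [memker] at hv
    simp only [QS, hv]
    exact Fq.addself _
  · ext w
    simp only [SetLike.mem_coe, Set.mem_setOf_eq, memker]
    constructor
    · intro h l hl
      rw [polar_QS, polar_Ppg, polar_Ppg, h, hl]
      exact Fq.addself _
    · intro h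
      have h1 := h ((1,0),(1,0)) rfl
      have h2 := h ((0,1),(0,1)) rfl
      rw [polar_QS, polar_Ppg, polar_Ppg] at h1 h2
      simp only [mul_one, mul_zero, zero_add, add_zero, one_mul, zero_mul] at h1 h2
      exact Prod.ext (Fq.eq_of_add_eq_zero h2) (Fq.eq_of_add_eq_zero h1)

/-- The key "square transfer" Lagrangian:
`P_{ac²,b} ⊥ P_{a,bc²} ⊥ P_{c,0}` is metabolic. -/
lemma hasLag_M3 (a b c : Fq) :
    HasLagrangian (QS (QS (Ppg (a*c^2) b) (Ppg a (b*c^2))) (Ppg c 0)) := by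
  classical
  refine ⟨{ carrier := {w | w.1.1.2 = c * w.1.2.2 ∧ w.1.2.1 = c * w.1.1.1 ∧ w.2.1 = 0},
            add_mem' := ?_, zero_mem' := by simp, smul_mem' := ?_ }, ?_, ?_⟩
  · rintro u w ⟨h1, h2, h3⟩ ⟨g1, g2, g3⟩
    refine ⟨?_, ?_, ?_⟩ <;>
      simp only [Prod.fst_add, Prod.snd_add, h1, h2, h3, g1, g2, g3] <;> ring
  · rintro r w ⟨h1, h2, h3⟩
    refine ⟨?_, ?_, ?_⟩ <;>
      simp only [Prod.smul_fst, Prod.smul_snd, smul_eq_mul, h1, h2, h3] <;> ring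
  · rintro ⟨⟨⟨x, y⟩, ⟨X, Y⟩⟩, ⟨u, v⟩⟩ ⟨h1, h2, h3⟩
    simp only at h1 h2 h3
    subst h1 h2 h3
    simp only [QS, Ppg]
    linear_combination (a * c^2 * x^2 + c * x * Y + b * c^2 * Y^2) * Fq.two
  · ext ⟨⟨⟨x, y⟩, ⟨X, Y⟩⟩, ⟨u, v⟩⟩
    simp only [SetLike.mem_coe, Set.mem_setOf_eq, Submodule.mem_mk, AddSubmonoid.mem_mk,
      AddSubsemigroup.mem_mk]
    constructor
    · rintro ⟨h1, h2, h3⟩ ⟨⟨⟨lx, ly⟩, ⟨lX, lY⟩⟩, ⟨lu, lv⟩⟩ ⟨g1, g2, g3⟩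
      simp only at h1 h2 h3 g1 g2 g3
      subst h1 h2 h3 g1 g2 g3
      rw [polar_QS, polar_QS, polar_Ppg, polar_Ppg, polar_Ppg]
      simp only
      linear_combination (c * x * lY + c * lx * Y) * Fq.two
    · intro h
      have h1 := h (((1,0),(c,0)),(0,0)) (by refine ⟨by simp, by simp, rfl⟩)
      have h2 := h (((0,c),(0,1)),(0,0)) (by refine ⟨by simp, by simp, rfl⟩)
      have h3 := h (((0,0),(0,0)),(0,1)) (by refine ⟨by simp, by simp, rfl⟩)
      rw [polar_QS, polar_QS, polar_Ppg, polar_Ppg, polar_Ppg] at h1 h2 h3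
      simp only [mul_one, mul_zero, zero_add, add_zero, one_mul, zero_mul] at h1 h2 h3
      refine ⟨?_, ?_, by simpa using h3⟩
      · rw [mul_comm c Y] at *
        exact Fq.eq_of_add_eq_zero h1
      · exact ((Fq.eq_of_add_eq_zero h2).symm).trans (mul_comm x c)

lemma isQF_Ppg (a b : Fq) : IsQuadraticForm (Ppg a b) := by
  constructor
  · intro c v
    simp only [Ppg, Prod.smul_fst, Prod.smul_snd, smul_eq_mul]
    ring
  · intro u
    constructor
    · intro w w'
      simp only [Ppg, Prod.fst_add, Prod.snd_add]
      ring
    · intro c w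
      simp only [Ppg, Prod.smul_fst, Prod.smul_snd, Prod.fst_add, Prod.snd_add, smul_eq_mul]
      ring

lemma isQF_QS {A : M → Fq} {B : N → Fq} (hA : IsQuadraticForm A) (hB : IsQuadraticForm B) :
    IsQuadraticForm (QS A B) := by
  constructor
  · intro c v
    simp only [QS, Prod.smul_fst, Prod.smul_snd, hA.1, hB.1]
    ring
  · intro u
    have hA2 := hA.2 u.1
    have hB2 := hB.2 u.2
    constructor
    · intro w w'
      have h1 := hA2.1 w.1 w'.1
      have h2 := hB2.1 w.2 w'.2
      simp only [QS, Prod.fst_add, Prod.snd_add] at *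
      linear_combination h1 + h2
    · intro c w
      have h1 := hA2.2 c w.1
      have h2 := hB2.2 c w.2
      simp only [QS, Prod.smul_fst, Prod.smul_snd, smul_eq_mul] at *
      linear_combination h1 + h2

lemma isQF_comp {A : M → Fq} (hA : IsQuadraticForm A) (e : N →ₗ[Fq] M) :
    IsQuadraticForm (A ∘ e) := by
  constructor
  · intro c v
    simp only [Function.comp_apply, map_smul, hA.1]
  · intro u
    have h := hA.2 (e u)
    constructor
    · intro w w'
      have := h.1 (e w) (e w')
      simp only [Function.comp_apply, map_add]
      linear_combination this
    · intro c w
      have := h.2 c (e w)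
      simp only [Function.comp_apply, map_add, map_smul]
      linear_combination this

lemma isQF_zero : IsQuadraticForm (fun _ : (Fin 0 → Fq) => (0:Fq)) := by
  refine ⟨fun c v => by ring, fun u => ⟨fun w w' => by simp, fun c w => by simp⟩⟩


/-- Witt equivalence of two quadratic forms (matching the shape of the target theorem). -/
def REL (A : M → Fq) (B : N → Fq) : Prop :=
  ∃ (k l : ℕ)
    (Q₀ : (Fin k → Fq) → Fq) (Q₀' : (Fin l → Fq) → Fq),
    IsQuadraticForm Q₀ ∧ IsQuadraticForm Q₀' ∧
    HasLagrangian Q₀ ∧ HasLagrangian Q₀' ∧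
    ∃ e : (M × (Fin k → Fq)) ≃ₗ[Fq] (N × (Fin l → Fq)),
      ∀ v, B (e v).1 + Q₀' (e v).2 = A v.1 + Q₀ v.2

def ψ (k l : ℕ) : (Fin (k+l) → Fq) ≃ₗ[Fq] (Fin k → Fq) × (Fin l → Fq) :=
  (LinearEquiv.funCongrLeft Fq Fq finSumFinEquiv).trans
    (LinearEquiv.sumArrowLequivProdArrow _ _ Fq Fq)

@[simp] lemma LEprodCongr_apply (e₁ : M ≃ₗ[Fq] M') (e₂ : N ≃ₗ[Fq] N') (x : M × N) :
    (e₁.prodCongr e₂) x = (e₁ x.1, e₂ x.2) := rfl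

@[simp] lemma LEprodAssoc_apply (x : (M × N) × P) :
    (LinearEquiv.prodAssoc Fq M N P) x = (x.1.1, (x.1.2, x.2)) := rfl

@[simp] lemma LEprodAssoc_symm_apply (x : M × (N × P)) :
    (LinearEquiv.prodAssoc Fq M N P).symm x = ((x.1, x.2.1), x.2.2) := rfl

@[simp] lemma LEprodComm_apply (x : M × N) :
    (LinearEquiv.prodComm Fq M N) x = (x.2, x.1) := rfl

@[simp] lemma LEprodProdProdComm_apply (x : (M × N) × (M' × N')) :
    (LinearEquiv.prodProdProdComm Fq M N M' N') x = ((x.1.1, x.2.1), (x.1.2, x.2.2)) := rfl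

lemma REL.ofIso {A : M → Fq} {B : N → Fq} (e₀ : M ≃ₗ[Fq] N) (h : ∀ v, B (e₀ v) = A v) :
    REL A B := by
  refine ⟨0, 0, _, _, isQF_zero, isQF_zero, hasLag_zero, hasLag_zero,
    ⟨LinearEquiv.prodCongr e₀ (LinearEquiv.refl Fq (Fin 0 → Fq)), fun v => ?_⟩⟩
  simpa using h v.1

lemma REL.refl (A : M → Fq) : REL A A := REL.ofIso (LinearEquiv.refl Fq M) (fun _ => rfl)

lemma REL.symm {A : M → Fq} {B : N → Fq} (h : REL A B) : REL B A := by
  obtain ⟨k, l, Q₀, Q₀', hq, hq', hl, hl', e, he⟩ := h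
  refine ⟨l, k, Q₀', Q₀, hq', hq, hl', hl, e.symm, fun w => ?_⟩
  have := he (e.symm w)
  rw [e.apply_symm_apply] at this
  exact this.symm

lemma isQF_comp' {A : M → Fq} (hA : IsQuadraticForm A) (e : N →ₗ[Fq] M) :
    IsQuadraticForm (fun v => A (e v)) := isQF_comp hA e

lemma REL.trans {A : M → Fq} {B : N → Fq} {C : P → Fq} (h₁ : REL A B) (h₂ : REL B C) :
    REL A C := by
  obtain ⟨k₁, l₁, Q₁, Q₁', hq₁, hq₁', hl₁, hl₁', e₁, he₁⟩ := h₁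
  obtain ⟨k₂, l₂, Q₂, Q₂', hq₂, hq₂', hl₂, hl₂', e₂, he₂⟩ := h₂
  refine ⟨k₁ + k₂, l₂ + l₁,
    (fun w => QS Q₁ Q₂ (ψ k₁ k₂ w)), (fun w => QS Q₂' Q₁' (ψ l₂ l₁ w)),
    isQF_comp' (isQF_QS hq₁ hq₂) (ψ k₁ k₂).toLinearMap,
    isQF_comp' (isQF_QS hq₂' hq₁') (ψ l₂ l₁).toLinearMap,
    hasLag_comp (hasLag_QS hq₁ hq₂ hl₁ hl₂) (ψ k₁ k₂),
    hasLag_comp (hasLag_QS hq₂' hq₁' hl₂' hl₁') (ψ l₂ l₁), ?_, ?_⟩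
  · exact (LinearEquiv.prodCongr (LinearEquiv.refl Fq M) (ψ k₁ k₂)).trans
      ((LinearEquiv.prodAssoc Fq M (Fin k₁ → Fq) (Fin k₂ → Fq)).symm.trans
      ((LinearEquiv.prodCongr e₁ (LinearEquiv.refl Fq (Fin k₂ → Fq))).trans
      (((LinearEquiv.prodAssoc Fq N (Fin l₁ → Fq) (Fin k₂ → Fq)).trans
        ((LinearEquiv.prodCongr (LinearEquiv.refl Fq N)
            (LinearEquiv.prodComm Fq (Fin l₁ → Fq) (Fin k₂ → Fq))).trans
          (LinearEquiv.prodAssoc Fq N (Fin k₂ → Fq) (Fin l₁ → Fq)).symm)).trans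
      ((LinearEquiv.prodCongr e₂ (LinearEquiv.refl Fq (Fin l₁ → Fq))).trans
      ((LinearEquiv.prodAssoc Fq P (Fin l₂ → Fq) (Fin l₁ → Fq)).trans
      (LinearEquiv.prodCongr (LinearEquiv.refl Fq P) (ψ l₂ l₁).symm))))))
  · intro v
    simp only [LinearEquiv.trans_apply, LEprodCongr_apply, LEprodAssoc_apply,
      LEprodAssoc_symm_apply, LEprodComm_apply, LinearEquiv.refl_apply, QS,
      LinearEquiv.apply_symm_apply]
    have H1 := he₁ (v.1, (ψ k₁ k₂ v.2).1)
    have H2 := he₂ ((e₁ (v.1, (ψ k₁ k₂ v.2).1)).1, (ψ k₁ k₂ v.2).2)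
    simp only [QS] at H1 H2
    linear_combination H1 + H2

lemma REL.congr {A : M → Fq} {A' : M' → Fq} {B : N → Fq} {B' : N' → Fq}
    (h₁ : REL A A') (h₂ : REL B B') : REL (QS A B) (QS A' B') := by
  obtain ⟨k₁, l₁, Q₁, Q₁', hq₁, hq₁', hl₁, hl₁', e₁, he₁⟩ := h₁
  obtain ⟨k₂, l₂, Q₂, Q₂', hq₂, hq₂', hl₂, hl₂', e₂, he₂⟩ := h₂
  refine ⟨k₁ + k₂, l₁ + l₂,
    (fun w => QS Q₁ Q₂ (ψ k₁ k₂ w)), (fun w => QS Q₁' Q₂' (ψ l₁ l₂ w)),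
    isQF_comp' (isQF_QS hq₁ hq₂) (ψ k₁ k₂).toLinearMap,
    isQF_comp' (isQF_QS hq₁' hq₂') (ψ l₁ l₂).toLinearMap,
    hasLag_comp (hasLag_QS hq₁ hq₂ hl₁ hl₂) (ψ k₁ k₂),
    hasLag_comp (hasLag_QS hq₁' hq₂' hl₁' hl₂') (ψ l₁ l₂), ?_, ?_⟩
  · exact (LinearEquiv.prodCongr (LinearEquiv.refl Fq (M × N)) (ψ k₁ k₂)).trans
      ((LinearEquiv.prodProdProdComm Fq M N (Fin k₁ → Fq) (Fin k₂ → Fq)).trans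
      ((LinearEquiv.prodCongr e₁ e₂).trans
      ((LinearEquiv.prodProdProdComm Fq M' (Fin l₁ → Fq) N' (Fin l₂ → Fq)).trans
      (LinearEquiv.prodCongr (LinearEquiv.refl Fq (M' × N')) (ψ l₁ l₂).symm))))
  · intro v
    simp only [LinearEquiv.trans_apply, LEprodCongr_apply, LEprodProdProdComm_apply,
      LinearEquiv.refl_apply, QS, LinearEquiv.apply_symm_apply]
    have H1 := he₁ (v.1.1, (ψ k₁ k₂ v.2).1)
    have H2 := he₂ (v.1.2, (ψ k₁ k₂ v.2).2)
    simp only [QS] at H1 H2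
    linear_combination H1 + H2

def prodFin0 (W : Type*) [AddCommGroup W] [Module Fq W] : (W × (Fin 0 → Fq)) ≃ₗ[Fq] W where
  toFun w := w.1
  invFun m := (m, 0)
  left_inv := fun w => Prod.ext rfl (Subsingleton.elim _ _)
  right_inv := fun m => rfl
  map_add' := fun a b => rfl
  map_smul' := fun c a => rfl

/-- dropping a metabolic summand -/
lemma REL.dropMetab {A : M → Fq} {Z : N → Fq} {m : ℕ} (τ : (Fin m → Fq) ≃ₗ[Fq] N)
    (hZq : IsQuadraticForm Z) (hZ : HasLagrangian Z) : REL (QS A Z) A := by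
  refine ⟨0, m, _, (fun w => Z (τ w)), isQF_zero,
    isQF_comp' hZq τ.toLinearMap, hasLag_zero, hasLag_comp hZ τ, ?_, ?_⟩
  · exact (prodFin0 (M × N)).trans
      (LinearEquiv.prodCongr (LinearEquiv.refl Fq M) τ.symm)
  · intro v
    simp only [prodFin0, LinearEquiv.trans_apply, LEprodCongr_apply, LinearEquiv.refl_apply,
      LinearEquiv.coe_mk, LinearMap.coe_mk, AddHom.coe_mk, QS, LinearEquiv.apply_symm_apply]
    ring

def τ₂ : (Fin 2 → Fq) ≃ₗ[Fq] (Fq × Fq) := LinearEquiv.finTwoArrow Fq Fq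

/-- two metabolic forms are equivalent -/
lemma REL.bothMetab {A B : (Fq × Fq) → Fq} (hAq : IsQuadraticForm A) (hBq : IsQuadraticForm B)
    (hA : HasLagrangian A) (hB : HasLagrangian B) : REL A B := by
  refine ⟨2, 2, (fun w => B (τ₂ w)), (fun w => A (τ₂ w)),
    isQF_comp' hBq τ₂.toLinearMap, isQF_comp' hAq τ₂.toLinearMap,
    hasLag_comp hB τ₂, hasLag_comp hA τ₂,
    (LinearEquiv.prodComm Fq _ _).trans (LinearEquiv.prodCongr τ₂ τ₂.symm), fun v => ?_⟩
  simp only [LinearEquiv.trans_apply, LEprodComm_apply, LEprodCongr_apply,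
    LinearEquiv.apply_symm_apply]
  ring

/-! ### Moves -/

lemma REL.swap (a b : Fq) : REL (Ppg a b) (Ppg b a) :=
  REL.ofIso (LinearEquiv.prodComm Fq Fq Fq)
    (fun v => by simp only [LEprodComm_apply, Ppg]; ring)

def shiftE (lam : Fq) : (Fq × Fq) ≃ₗ[Fq] (Fq × Fq) where
  toFun v := (v.1 + lam * v.2, v.2)
  invFun v := (v.1 + lam * v.2, v.2)
  left_inv v := Prod.ext (by linear_combination (lam * v.2) * Fq.two) rfl
  right_inv v := Prod.ext (by linear_combination (lam * v.2) * Fq.two) rfl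
  map_add' u v := Prod.ext
    (by simp only [Prod.fst_add, Prod.snd_add]; ring) rfl
  map_smul' c v := Prod.ext
    (by simp only [Prod.smul_fst, Prod.smul_snd, smul_eq_mul, RingHom.id_apply]; ring) rfl

lemma REL.shift (a b lam : Fq) : REL (Ppg a b) (Ppg a (b + a * lam^2 + lam)) :=
  REL.ofIso (shiftE lam) (fun v => by
    show Ppg a (b + a * lam^2 + lam) (v.1 + lam * v.2, v.2) = Ppg a b v
    simp only [Ppg]
    linear_combination (a * lam * v.1 * v.2 + a * lam^2 * v.2^2 + lam * v.2^2) * Fq.two)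

def m4E : ((Fq × Fq) × (Fq × Fq)) ≃ₗ[Fq] ((Fq × Fq) × (Fq × Fq)) where
  toFun w := ((w.1.1, w.1.2 + w.2.2), (w.1.1 + w.2.1, w.2.2))
  invFun w := ((w.1.1, w.1.2 + w.2.2), (w.1.1 + w.2.1, w.2.2))
  left_inv w := by
    refine Prod.ext (Prod.ext rfl ?_) (Prod.ext ?_ rfl)
    · show w.1.2 + w.2.2 + w.2.2 = w.1.2
      linear_combination w.2.2 * Fq.two
    · show w.1.1 + (w.1.1 + w.2.1) = w.2.1
      linear_combination w.1.1 * Fq.two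
  right_inv w := by
    refine Prod.ext (Prod.ext rfl ?_) (Prod.ext ?_ rfl)
    · show w.1.2 + w.2.2 + w.2.2 = w.1.2
      linear_combination w.2.2 * Fq.two
    · show w.1.1 + (w.1.1 + w.2.1) = w.2.1
      linear_combination w.1.1 * Fq.two
  map_add' u v := by
    refine Prod.ext (Prod.ext ?_ ?_) (Prod.ext ?_ ?_) <;>
      simp only [Prod.fst_add, Prod.snd_add] <;> ring
  map_smul' c v := by
    refine Prod.ext (Prod.ext ?_ ?_) (Prod.ext ?_ ?_) <;>
      simp only [Prod.smul_fst, Prod.smul_snd, smul_eq_mul, RingHom.id_apply] <;> ring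

/-- additivity in the first slot -/
lemma REL.add (a b c : Fq) : REL (QS (Ppg a b) (Ppg c b)) (Ppg (a+c) b) := by
  have h1 : REL (QS (Ppg a b) (Ppg c b)) (QS (Ppg (a+c) b) (Ppg c 0)) := by
    refine REL.ofIso m4E (fun w => ?_)
    show QS (Ppg (a+c) b) (Ppg c 0)
        ((w.1.1, w.1.2 + w.2.2), (w.1.1 + w.2.1, w.2.2)) = QS (Ppg a b) (Ppg c b) w
    simp only [QS, Ppg]
    linear_combination (c * w.1.1^2 + w.1.1 * w.2.2 + b * w.1.2 * w.2.2
      + c * w.1.1 * w.2.1) * Fq.two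
  exact h1.trans (REL.dropMetab τ₂ (isQF_Ppg c 0) (hasLag_a0 c))

def τ₆ : (Fin (4+2) → Fq) ≃ₗ[Fq] ((Fq×Fq) × (Fq×Fq)) × (Fq×Fq) :=
  (ψ 4 2).trans
    (LinearEquiv.prodCongr ((ψ 2 2).trans (LinearEquiv.prodCongr τ₂ τ₂)) τ₂)

def m3E : ((Fq × Fq) × (Fin (4+2) → Fq)) ≃ₗ[Fq] ((Fq × Fq) × (Fin (4+2) → Fq)) where
  toFun v := ((τ₆ v.2).1.1, τ₆.symm ((v.1, (τ₆ v.2).1.2), (τ₆ v.2).2))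
  invFun v := ((τ₆ v.2).1.1, τ₆.symm ((v.1, (τ₆ v.2).1.2), (τ₆ v.2).2))
  left_inv v := by
    simp only [LinearEquiv.apply_symm_apply]
    exact Prod.ext rfl (by simp)
  right_inv v := by
    simp only [LinearEquiv.apply_symm_apply]
    exact Prod.ext rfl (by simp)
  map_add' u v := by
    refine Prod.ext ?_ ?_
    · simp only [Prod.snd_add, map_add, Prod.fst_add]
    · show τ₆.symm _ = τ₆.symm _ + τ₆.symm _
      rw [← map_add]
      congr 1
  map_smul' c v := by
    refine Prod.ext ?_ ?_
    · simp only [Prod.smul_snd, map_smul, Prod.smul_fst, RingHom.id_apply]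
    · show τ₆.symm _ = c • τ₆.symm _
      rw [← map_smul]
      congr 1

/-- square transfer -/
lemma REL.sqTransfer (a b c : Fq) : REL (Ppg (a * c^2) b) (Ppg a (b * c^2)) := by
  refine ⟨4+2, 4+2,
    (fun w => QS (QS (Ppg a (b*c^2)) (Ppg a (b*c^2))) (Ppg c 0) (τ₆ w)),
    (fun w => QS (QS (Ppg (a*c^2) b) (Ppg a (b*c^2))) (Ppg c 0) (τ₆ w)),
    isQF_comp' (isQF_QS (isQF_QS (isQF_Ppg _ _) (isQF_Ppg _ _)) (isQF_Ppg _ _)) τ₆.toLinearMap,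
    isQF_comp' (isQF_QS (isQF_QS (isQF_Ppg _ _) (isQF_Ppg _ _)) (isQF_Ppg _ _)) τ₆.toLinearMap,
    hasLag_comp (hasLag_QS (isQF_QS (isQF_Ppg _ _) (isQF_Ppg _ _)) (isQF_Ppg _ _)
      (hasLag_diag a (b*c^2)) (hasLag_a0 c)) τ₆,
    hasLag_comp (hasLag_M3 a b c) τ₆,
    m3E, fun v => ?_⟩
  show Ppg a (b*c^2) ((τ₆ v.2).1.1)
      + QS (QS (Ppg (a*c^2) b) (Ppg a (b*c^2))) (Ppg c 0)
          (τ₆ (τ₆.symm ((v.1, (τ₆ v.2).1.2), (τ₆ v.2).2)))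
    = Ppg (a*c^2) b v.1
      + QS (QS (Ppg a (b*c^2)) (Ppg a (b*c^2))) (Ppg c 0) (τ₆ v.2)
  rw [LinearEquiv.apply_symm_apply]
  simp only [QS]
  ring

/-- both-metabolic binary forms are equivalent -/
lemma REL.metab2 {A B : (Fq × Fq) → Fq} (hAq : IsQuadraticForm A) (hBq : IsQuadraticForm B)
    (hA : HasLagrangian A) (hB : HasLagrangian B) : REL A B :=
  REL.bothMetab hAq hBq hA hB

/-! ### Arithmetic: even/odd decomposition and the main induction -/

lemma sq_eq_expand (f : Fq) : f ^ 2 = (Polynomial.expand (ZMod 2) 2) f := by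
  have h := Polynomial.map_frobenius_expand 2 f
  have hfr : frobenius (ZMod 2) 2 = RingHom.id (ZMod 2) := by
    ext a
    rw [frobenius_def]
    exact ZMod.pow_card a
  rw [hfr, Polynomial.map_id] at h
  exact h.symm

lemma dec (d : Fq) : ∃ D E : Fq, d = D^2 + Polynomial.X * E^2 ∧
    (d.natDegree = 0 → E = 0) ∧ (1 ≤ d.natDegree → E.natDegree < d.natDegree) := by
  classical
  set n := d.natDegree with hn
  refine ⟨∑ i ∈ Finset.range (n+1), Polynomial.monomial i (d.coeff (2*i)),
          ∑ i ∈ Finset.range n, Polynomial.monomial i (d.coeff (2*i+1)), ?_, ?_, ?_⟩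
  · rw [sq_eq_expand, sq_eq_expand]
    ext m
    rw [Polynomial.coeff_add]
    have hD : ∀ j : ℕ, ((Polynomial.expand (ZMod 2) 2)
        (∑ i ∈ Finset.range (n+1), Polynomial.monomial i (d.coeff (2*i)))).coeff (2*j)
        = if j ≤ n then d.coeff (2*j) else 0 := by
      intro j
      rw [Polynomial.coeff_expand (by norm_num)]
      simp only [Nat.mul_div_cancel_left _ (by norm_num : 0 < 2), dvd_mul_right, if_true]
      rw [Polynomial.finset_sum_coeff]
      simp only [Polynomial.coeff_monomial]
      rw [Finset.sum_ite_eq' (Finset.range (n+1)) j (fun i => d.coeff (2*i))]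
      simp [Nat.lt_succ_iff]
    have hE : ∀ j : ℕ, ((Polynomial.expand (ZMod 2) 2)
        (∑ i ∈ Finset.range n, Polynomial.monomial i (d.coeff (2*i+1)))).coeff (2*j)
        = if j < n then d.coeff (2*j+1) else 0 := by
      intro j
      rw [Polynomial.coeff_expand (by norm_num)]
      simp only [Nat.mul_div_cancel_left _ (by norm_num : 0 < 2), dvd_mul_right, if_true]
      rw [Polynomial.finset_sum_coeff]
      simp only [Polynomial.coeff_monomial]
      rw [Finset.sum_ite_eq' (Finset.range n) j (fun i => d.coeff (2*i+1))]
      simp [Finset.mem_range]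
    have hodd : ∀ m : ℕ, ¬ (2 ∣ m) → ((Polynomial.expand (ZMod 2) 2)
        (∑ i ∈ Finset.range (n+1), Polynomial.monomial i (d.coeff (2*i)))).coeff m = 0 := by
      intro m hm
      rw [Polynomial.coeff_expand (by norm_num), if_neg hm]
    rcases Nat.even_or_odd m with ⟨j, hj⟩ | ⟨j, hj⟩
    · subst hj
      have h2j : j + j = 2 * j := by ring
      rw [h2j, hD j]
      rcases Nat.eq_zero_or_pos j with rfl | hj0
      · simp only [Nat.mul_zero, Polynomial.mul_coeff_zero, Polynomial.coeff_X_zero, zero_mul,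
          add_zero]
        simp [hn]
      · obtain ⟨k, hk⟩ : ∃ k, 2 * j = k + 1 := ⟨2*j - 1, by omega⟩
        rw [hk, Polynomial.coeff_X_mul]
        have : ¬ (2 ∣ k) := by omega
        rw [Polynomial.coeff_expand (by norm_num : 0 < 2), if_neg this]
        rw [add_zero]
        by_cases hjn : j ≤ n
        · rw [if_pos hjn]
        · rw [if_neg hjn]
          exact Polynomial.coeff_eq_zero_of_natDegree_lt (by rw [← hn]; omega)
    · subst hj
      rw [hodd (2*j+1) (by omega)]
      rw [zero_add, Polynomial.coeff_X_mul, hE j]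
      by_cases hjn : j < n
      · rw [if_pos hjn]
      · rw [if_neg hjn]
        exact Polynomial.coeff_eq_zero_of_natDegree_lt (by rw [← hn]; omega)
  · intro h0
    have : n = 0 := h0
    rw [this]
    simp
  · intro h1
    have hb : (∑ i ∈ Finset.range n, Polynomial.monomial i (d.coeff (2*i+1))).natDegree ≤ n - 1 :=
      Polynomial.natDegree_sum_le_of_forall_le _ _ (fun i hi =>
        le_trans (Polynomial.natDegree_monomial_le _) (by
          have := Finset.mem_range.mp hi; omega))
    omega

lemma rel_metab_a0 (a a' : Fq) : REL (Ppg a 0) (Ppg a' 0) :=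
  REL.metab2 (isQF_Ppg _ _) (isQF_Ppg _ _) (hasLag_a0 a) (hasLag_a0 a')

lemma T3base (d : Fq) (hd : d.natDegree = 0) :
    REL (Ppg Polynomial.X d) (Ppg 1 (Polynomial.X * d)) := by
  obtain ⟨a, ha⟩ := Polynomial.natDegree_eq_zero.mp hd
  have h01 : a = 0 ∨ a = 1 := (by decide : ∀ x : ZMod 2, x = 0 ∨ x = 1) a
  rcases h01 with rfl | rfl
  · rw [map_zero] at ha
    rw [← ha, mul_zero]
    exact rel_metab_a0 _ _
  · rw [map_one] at ha
    rw [← ha, mul_one]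
    exact REL.swap _ _

lemma T3 : ∀ (n : ℕ) (d : Fq), d.natDegree ≤ n →
    REL (Ppg Polynomial.X d) (Ppg 1 (Polynomial.X * d)) := by
  intro n
  induction n with
  | zero => exact fun d hd => T3base d (Nat.le_zero.mp hd)
  | succ n ih =>
    intro d hd
    by_cases hc : d.natDegree = 0
    · exact T3base d hc
    obtain ⟨D, E, hde, h0, h1⟩ := dec d
    have hE : REL (Ppg Polynomial.X E) (Ppg 1 (Polynomial.X * E)) :=
      ih E (by have := h1 (Nat.pos_of_ne_zero hc); omega)
    have s1 : REL (Ppg Polynomial.X d) (Ppg d Polynomial.X) := REL.swap _ _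
    have s2 : REL (QS (Ppg (D^2) Polynomial.X) (Ppg (Polynomial.X*E^2) Polynomial.X))
        (Ppg d Polynomial.X) := by
      have h := REL.add (D^2) Polynomial.X (Polynomial.X*E^2)
      rw [← hde] at h
      exact h
    have s3l : REL (Ppg (D^2) Polynomial.X) (Ppg (Polynomial.X*D^2) 1) := by
      have h := REL.sqTransfer 1 Polynomial.X D
      rw [one_mul] at h
      exact h.trans (REL.swap _ _)
    have s3r : REL (Ppg (Polynomial.X*E^2) Polynomial.X) (Ppg (Polynomial.X*E) 1) := by
      have h := REL.sqTransfer Polynomial.X Polynomial.X E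
      have h2 := REL.shift Polynomial.X (Polynomial.X*E^2) E
      rw [show Polynomial.X*E^2 + Polynomial.X*E^2 + E = E by
        linear_combination (Polynomial.X*E^2) * Fq.two] at h2
      exact ((h.trans h2).trans hE).trans (REL.swap _ _)
    have s4 : REL (QS (Ppg (Polynomial.X*D^2) 1) (Ppg (Polynomial.X*E) 1))
        (Ppg 1 (Polynomial.X*d)) := by
      have h := REL.add (Polynomial.X*D^2) 1 (Polynomial.X*E)
      have h2 := REL.shift 1 (Polynomial.X*D^2 + Polynomial.X*E) (Polynomial.X*E)
      rw [show Polynomial.X*D^2 + Polynomial.X*E + 1*(Polynomial.X*E)^2 + Polynomial.X*E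
          = Polynomial.X*d by rw [hde]; linear_combination (Polynomial.X*E) * Fq.two] at h2
      exact h.trans ((REL.swap _ _).trans h2)
    exact s1.trans (s2.symm.trans ((REL.congr s3l s3r).trans s4))

lemma mainREL (p g : Fq) : REL (Ppg p g) (Ppg (p*g) 1) := by
  obtain ⟨G, S, hg, -, -⟩ := dec g
  have s1 : REL (Ppg p g) (Ppg g p) := REL.swap _ _
  have s2 : REL (QS (Ppg (G^2) p) (Ppg (Polynomial.X*S^2) p)) (Ppg g p) := by
    have h := REL.add (G^2) p (Polynomial.X*S^2)
    rw [← hg] at h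
    exact h
  have s3l : REL (Ppg (G^2) p) (Ppg (p*G^2) 1) := by
    have h := REL.sqTransfer 1 p G
    rw [one_mul] at h
    exact h.trans (REL.swap _ _)
  have s3r : REL (Ppg (Polynomial.X*S^2) p) (Ppg (Polynomial.X*(p*S^2)) 1) := by
    have h := REL.sqTransfer Polynomial.X p S
    exact (h.trans (T3 (p*S^2).natDegree (p*S^2) le_rfl)).trans (REL.swap _ _)
  have s4 : REL (QS (Ppg (p*G^2) 1) (Ppg (Polynomial.X*(p*S^2)) 1)) (Ppg (p*g) 1) := by
    have h := REL.add (p*G^2) 1 (Polynomial.X*(p*S^2))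
    rw [show p*G^2 + Polynomial.X*(p*S^2) = p*g by rw [hg]; ring] at h
    exact h
  exact s1.trans (s2.symm.trans ((REL.congr s3l s3r).trans s4))

end WittAux

/-- For all `p, g ∈ 𝔽₂[t]` there are quadratic forms `m₀`, `m₀'` on finitely generated
free `𝔽₂[t]`-modules, each admitting a Lagrangian, with `P_{p,g} ⊕ m₀` isometric to
`P_{pg,1} ⊕ m₀'`; that is, `[P_{p,g}] = [P_{pg,1}]` in the Witt group. -/
theorem witt_Ppg_eq_Ppg_one (p g : Polynomial (ZMod 2)) :
    ∃ (k l : ℕ)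
      (Q₀ : (Fin k → Polynomial (ZMod 2)) → Polynomial (ZMod 2))
      (Q₀' : (Fin l → Polynomial (ZMod 2)) → Polynomial (ZMod 2)),
      IsQuadraticForm Q₀ ∧ IsQuadraticForm Q₀' ∧
      HasLagrangian Q₀ ∧ HasLagrangian Q₀' ∧
      ∃ e : ((Polynomial (ZMod 2) × Polynomial (ZMod 2)) × (Fin k → Polynomial (ZMod 2)))
            ≃ₗ[Polynomial (ZMod 2)]
            ((Polynomial (ZMod 2) × Polynomial (ZMod 2)) × (Fin l → Polynomial (ZMod 2))),
        ∀ v, Ppg (p * g) 1 (e v).1 + Q₀' (e v).2 = Ppg p g v.1 + Q₀ v.2 := by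
  exact WittAux.mainREL p g
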